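/- Let H be a symmetric n×n real matrix with ‖H‖ ≤ M, let ε > 0, ζ ∈ (0,1), κ = (M+2ε)/ε, and ζ̂ = ζ/(3κ) (so ζ̂ ≤ 1/6). Suppose d ∈ ℝⁿ and g ∈ ℝⁿ with g ≠ 0 satisfy ‖(H + 2εI)d + g‖ ≤ ζ̂‖g‖. Then, writing r̂ = (H + 2εI)d + g, one has ‖r̂‖ ≤ (ζ̂/(1−ζ̂))(M+2ε)‖d‖ ≤ (1/2)εζ‖d‖. -/

import Mathlib

open RealInnerProductSpace

/-- Bound (16c) on the residual of the SOL output of Capped CG: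
`‖r̂‖ ≤ (ζ̂/(1−ζ̂))(M+2ε)‖d‖ ≤ (1/2)εζ‖d‖`. -/
theorem stmt13
    {n : ℕ} (H : EuclideanSpace ℝ (Fin n) →L[ℝ] EuclideanSpace ℝ (Fin n))
    (hsym : ∀ x y : EuclideanSpace ℝ (Fin n), ⟪H x, y⟫ = ⟪x, H y⟫)
    (ε M ζ κ ζhat : ℝ) (hε : 0 < ε) (hM : ‖H‖ ≤ M) (hζ : ζ ∈ Set.Ioo (0:ℝ) 1)
    (hκ : κ = (M + 2*ε)/ε)
    (hζhat : ζhat = ζ / (3*κ))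
    (g d rhat : EuclideanSpace ℝ (Fin n)) (hg : g ≠ 0)
    (hrhat : rhat = H d + (2*ε) • d + g)
    (hres : ‖rhat‖ ≤ ζhat * ‖g‖) :
    ‖rhat‖ ≤ ζhat / (1 - ζhat) * (M + 2*ε) * ‖d‖ ∧
    ζhat / (1 - ζhat) * (M + 2*ε) * ‖d‖ ≤ 1/2 * ε * ζ * ‖d‖ := by
  obtain ⟨hζ0, hζ1⟩ := hζ
  have hM0 : 0 ≤ M := le_trans (norm_nonneg H) hM
  have hA : 0 < M + 2*ε := by linarith
  have hζhat' : ζhat = ζ * ε / (3*(M + 2*ε)) := by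
    rw [hζhat, hκ]; field_simp
  have hζhat0 : 0 < ζhat := by
    rw [hζhat']; positivity
  have hζhat6 : ζhat ≤ 1/6 := by
    rw [hζhat', div_le_iff₀ (by positivity)]
    nlinarith
  -- bound ‖(H+2ε)d‖
  have hHd : ‖H d + (2*ε) • d‖ ≤ (M + 2*ε) * ‖d‖ := by
    calc ‖H d + (2*ε) • d‖ ≤ ‖H d‖ + ‖(2*ε) • d‖ := norm_add_le _ _
    _ ≤ M * ‖d‖ + (2*ε) * ‖d‖ := by
        have h1 : ‖H d‖ ≤ M * ‖d‖ :=
          le_trans (H.le_opNorm d) (mul_le_mul_of_nonneg_right hM (norm_nonneg d))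
        have h2 : ‖(2*ε) • d‖ = (2*ε) * ‖d‖ := by
          rw [norm_smul, Real.norm_eq_abs, abs_of_pos (by linarith)]
        linarith
    _ = (M + 2*ε) * ‖d‖ := by ring
  have hgle : ‖g‖ ≤ ‖rhat‖ + (M + 2*ε) * ‖d‖ := by
    have : g = rhat - (H d + (2*ε) • d) := by rw [hrhat]; abel
    calc ‖g‖ = ‖rhat - (H d + (2*ε) • d)‖ := by rw [← this]
    _ ≤ ‖rhat‖ + ‖H d + (2*ε) • d‖ := norm_sub_le _ _
    _ ≤ ‖rhat‖ + (M + 2*ε) * ‖d‖ := by linarith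
  have hkey : (1 - ζhat) * ‖g‖ ≤ (M + 2*ε) * ‖d‖ := by nlinarith
  have h1mz : 0 < 1 - ζhat := by linarith
  have hgle2 : ‖g‖ ≤ (M + 2*ε) * ‖d‖ / (1 - ζhat) := by
    rw [le_div_iff₀ h1mz]; nlinarith
  have hfirst : ‖rhat‖ ≤ ζhat / (1 - ζhat) * (M + 2*ε) * ‖d‖ := by
    calc ‖rhat‖ ≤ ζhat * ‖g‖ := hres
    _ ≤ ζhat * ((M + 2*ε) * ‖d‖ / (1 - ζhat)) := by gcongr
    _ = ζhat / (1 - ζhat) * (M + 2*ε) * ‖d‖ := by field_simp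
  refine ⟨hfirst, ?_⟩
  rw [div_mul_eq_mul_div, div_mul_eq_mul_div, div_le_iff₀ h1mz]
  have hzA : ζhat * (M + 2*ε) = ζ * ε / 3 := by
    rw [hζhat']; field_simp
  have hd0 : 0 ≤ ‖d‖ := norm_nonneg d
  nlinarith [mul_nonneg (mul_nonneg hε.le hζ0.le) hd0]
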